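/- Let X, Y, ε be random variables such that the conditional distribution of ε given X is the Dirac measure at M(X) for a measurable function M. Then the conditional distribution of ε given Y equals the pushforward under M of the conditional distribution of X given Y: μ_{ε|Y}(·|y) = M_# μ_{X|Y}(·|y) for almost every y. -/

import Mathlib

open MeasureTheory ProbabilityTheory

/-- If the conditional distribution of `ε` given `X` is the Dirac measure at `M(X)`
(i.e. `ε = M ∘ X` for measurable `M`), then for almost every observation `y`,
the conditional distribution of `ε` given `Y = y` is the pushforward under `M`
of the conditional distribution of `X` given `Y = y`. -/
theorem stmt_1 {Ω : Type*} [MeasurableSpace Ω] [StandardBorelSpace Ω]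
    {n m : ℕ} (P : Measure Ω) [IsProbabilityMeasure P]
    (X : Ω → (Fin n → ℝ)) (Y : Ω → (Fin m → ℝ)) (ε : Ω → (Fin m → ℝ))
    (M : (Fin n → ℝ) → (Fin m → ℝ))
    (hX : Measurable X) (hY : Measurable Y) (hM : Measurable M)
    (hε : ε = M ∘ X) :
    ∀ᵐ y ∂(P.map Y),
      (condDistrib ε Y P) y = ((condDistrib X Y P) y).map M := by
  subst hε
  set κ : Kernel (Fin m → ℝ) (Fin m → ℝ) := Kernel.map (condDistrib X Y P) M with hκ
  have hκM : IsMarkovKernel κ := Kernel.IsMarkovKernel.map _ hM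
  -- disintegration of the distribution of (Y, X)
  have hfst : (P.map fun ω => (Y ω, X ω)).fst = P.map Y := by
    rw [Measure.fst_map_prodMk hX]
  have hd : P.map Y ⊗ₘ condDistrib X Y P = P.map fun ω => (Y ω, X ω) := by
    exact compProd_map_condDistrib hX.aemeasurable
  have hcomp : P.map (fun ω => (Y ω, (M ∘ X) ω)) = P.map Y ⊗ₘ κ := by
    ext s hs
    rw [Measure.map_apply (hY.prod (hM.comp hX)) hs,
      Measure.compProd_apply hs]
    have hs' : MeasurableSet ((fun p : (Fin m → ℝ) × (Fin n → ℝ) => (p.1, M p.2)) ⁻¹' s) :=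
      (measurable_fst.prodMk (hM.comp measurable_snd)) hs
    have : ((fun ω => (Y ω, (M ∘ X) ω)) ⁻¹' s)
        = (fun ω => (Y ω, X ω)) ⁻¹' ((fun p : (Fin m → ℝ) × (Fin n → ℝ) => (p.1, M p.2)) ⁻¹' s) := rfl
    rw [this, ← Measure.map_apply (hY.prod hX) hs', ← hd,
      Measure.compProd_apply hs']
    refine lintegral_congr fun y => ?_
    rw [hκ, Kernel.map_apply' _ hM _ (measurable_prodMk_left hs)]
    rfl
  have h := condDistrib_ae_eq_of_measure_eq_compProd (μ := P) Y (hM.comp hX).aemeasurable (κ := κ) hcomp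
  filter_upwards [h] with y hy
  rw [hy, hκ, Kernel.map_apply _ hM]
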